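/- If the non-wrapping induced maps F_{(m)} : F_2^m → F_2^{m-k+1} are balanced for all m ≥ k, then for every n ≥ k and every finite bit string y of length n, there exists a periodic doubly-infinite string x (of some period dividing at most 2^k·n) such that the cellular automaton F : F_2^Z → F_2^Z induced by f maps x to a periodic string containing y; in particular F restricted to the set P of periodic doubly-infinite strings is surjective onto P. -/

import Mathlib

/-- The cyclic (shift-invariant, periodic boundary) map on `n` bits induced by a
Boolean function `f` on `k` bits. -/
def cyc {k n : ℕ} (f : (Fin k → Bool) → Bool) (x : Fin n → Bool) : Fin n → Bool :=
  fun i => f fun j => x ⟨(i.val + j.val) % n, Nat.mod_lt _ i.pos⟩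

/-- The non-wrapping induced map `F_{(m)} : F_2^m → F_2^{m-k+1}`. -/
def ncyc {k m : ℕ} (hk : k ≤ m) (f : (Fin k → Bool) → Bool) (x : Fin m → Bool) :
    Fin (m - k + 1) → Bool :=
  fun i => f fun j => x ⟨i.val + j.val, by have h1 := i.isLt; have h2 := j.isLt; omega⟩
/-- The cellular automaton on doubly-infinite strings induced by `f`. -/
def caMap {k : ℕ} (f : (Fin k → Bool) → Bool) (x : ℤ → Bool) : ℤ → Bool :=
  fun i => f fun j => x (i + (j.val : ℤ))

/-- A doubly-infinite string is periodic with period `p`. -/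
def IsPeriodic (x : ℤ → Bool) (p : ℤ) : Prop := 0 < p ∧ ∀ i, x (i + p) = x i

/-- Reduction of an integer modulo a positive natural number, as an element of `Fin n`. -/
def zmod' (n : ℕ) (hn : 0 < n) (i : ℤ) : Fin n :=
  ⟨(i % (n:ℤ)).toNat, by
    have h1 := Int.emod_nonneg i (by exact_mod_cast hn.ne' : (n:ℤ) ≠ 0)
    have h2 := Int.emod_lt_of_pos i (by exact_mod_cast hn : (0:ℤ) < (n:ℤ))
    omega⟩

lemma zmod'_add_mul (n : ℕ) (hn : 0 < n) (i d : ℤ) :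
    zmod' n hn (i + (n:ℤ) * d) = zmod' n hn i := by
  apply Fin.ext
  show ((i + (n:ℤ) * d) % (n:ℤ)).toNat = (i % (n:ℤ)).toNat
  rw [Int.add_mul_emod_self_left]

lemma zmod'_coe (n : ℕ) (hn : 0 < n) (i : Fin n) : zmod' n hn ((i.val : ℤ)) = i := by
  apply Fin.ext
  show (((i.val:ℤ)) % (n:ℤ)).toNat = i.val
  rw [Int.emod_eq_of_lt (by positivity) (by exact_mod_cast i.isLt)]
  exact Int.toNat_natCast i.val

lemma per_mul {g : ℤ → Bool} {p : ℤ} (hg : ∀ i, g (i + p) = g i) :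
    ∀ (m : ℤ) (i : ℤ), g (i + p * m) = g i := by
  intro m
  induction m using Int.induction_on with
  | zero => simp
  | succ m ih =>
    intro i
    have h1 : i + p * ((m:ℤ) + 1) = (i + p * m) + p := by ring
    rw [h1, hg, ih]
  | pred m ih =>
    intro i
    have h2 := hg (i + p * (-(m:ℤ) - 1))
    have h1 : i + p * (-(m:ℤ) - 1) + p = i + p * (-(m:ℤ)) := by ring
    rw [h1] at h2
    rw [← h2, ih]

lemma per_reduce {g : ℤ → Bool} {p : ℤ} (hg : ∀ i, g (i + p) = g i) (i : ℤ) :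
    g i = g (i % p) := by
  conv_lhs => rw [← Int.emod_add_mul_ediv i p]
  exact per_mul hg (i / p) (i % p)

lemma caMap_per {k : ℕ} (f : (Fin k → Bool) → Bool) {x : ℤ → Bool} {p : ℤ}
    (hx : ∀ i, x (i + p) = x i) : ∀ i, caMap f x (i + p) = caMap f x i := by
  intro i
  unfold caMap
  congr 1
  funext j
  have h : i + p + (j.val : ℤ) = (i + (j.val : ℤ)) + p := by ring
  rw [h, hx]

lemma core_lemma {k : ℕ} (hk : 0 < k) (f : (Fin k → Bool) → Bool)
    (hbal : ∀ (m : ℕ) (hm : k ≤ m) (y : Fin (m - k + 1) → Bool),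
      (Finset.univ.filter fun x : Fin m → Bool => ncyc hm f x = y).card = 2 ^ (k - 1))
    {n : ℕ} (hn : 0 < n) (Y : Fin n → Bool) :
    ∃ (x : ℤ → Bool) (p : ℕ), 0 < p ∧ p ≤ 2 ^ (k - 1) * n ∧
      (∀ i, x (i + (p:ℤ)) = x i) ∧ (∀ i : ℤ, caMap f x i = Y (zmod' n hn i)) := by
  set R := 2 ^ (k - 1) with hR
  have hR1 : 0 < R := by positivity
  have hRn : 0 < R * n := Nat.mul_pos hR1 hn
  set m := R * n + k - 1 with hm_def
  have hm : k ≤ m := by omega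
  have hmk : m - k + 1 = R * n := by omega
  -- get a preimage w of the R-fold repetition of Y
  set YR : Fin (m - k + 1) → Bool := fun i => Y (zmod' n hn (i.val : ℤ)) with hYR
  have hcardpos : 0 < (Finset.univ.filter
      fun x : Fin m → Bool => ncyc hm f x = YR).card := by
    rw [hbal m hm YR]; positivity
  obtain ⟨w, hw⟩ := Finset.card_pos.mp hcardpos
  have hw : ncyc hm f w = YR := (Finset.mem_filter.mp hw).2
  have wc : ∀ (i1 i2 : ℕ) (h1 : i1 < m) (h2 : i2 < m), i1 = i2 →
      w ⟨i1, h1⟩ = w ⟨i2, h2⟩ := by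
    intro i1 i2 h1 h2 h
    cases h; rfl
  -- pigeonhole on windows of length k-1 at positions j*n
  have hidx : ∀ (j : Fin (R + 1)) (t : Fin (k - 1)), j.val * n + t.val < m := by
    intro j t
    have h1 : j.val ≤ R := Nat.lt_succ_iff.mp j.isLt
    have h2 : j.val * n ≤ R * n := Nat.mul_le_mul_right n h1
    have h3 := t.isLt
    omega
  set g : Fin (R + 1) → (Fin (k - 1) → Bool) :=
    fun j t => w ⟨j.val * n + t.val, hidx j t⟩ with hg
  have hcard : Fintype.card (Fin (k - 1) → Bool) < Fintype.card (Fin (R + 1)) := by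
    simp [hR]
  obtain ⟨j1, j2, hne12, heq12⟩ := Fintype.exists_ne_map_eq_of_card_lt g hcard
  obtain ⟨u, v, huv, hwin0⟩ : ∃ u v : Fin (R + 1), u.val < v.val ∧ g u = g v := by
    rcases Ne.lt_or_gt hne12 with h | h
    · exact ⟨j1, j2, h, heq12⟩
    · exact ⟨j2, j1, h, heq12.symm⟩
  set a := u.val * n with ha
  set b := v.val * n with hb
  have hab : a < b := Nat.mul_lt_mul_of_pos_right huv hn
  have hbR : b ≤ R * n := Nat.mul_le_mul_right n (Nat.lt_succ_iff.mp v.isLt)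
  set p' := b - a with hp'
  have hp'pos : 0 < p' := by omega
  have hp'int : (0:ℤ) < (p':ℤ) := by exact_mod_cast hp'pos
  have hwin : ∀ (t : ℕ) (ht : t < k - 1) (h1 : a + t < m) (h2 : b + t < m),
      w ⟨a + t, h1⟩ = w ⟨b + t, h2⟩ := by
    intro t ht h1 h2
    have := congrFun hwin0 ⟨t, ht⟩
    simp only [hg] at this
    exact (wc _ _ _ _ rfl).trans (this.trans (wc _ _ _ _ rfl))
  -- w is p'-periodic on the range [a, b + k - 1)
  have hww : ∀ t : ℕ, t < p' + k - 1 → ∀ (h1 : a + t % p' < m) (h2 : a + t < m),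
      w ⟨a + t % p', h1⟩ = w ⟨a + t, h2⟩ := by
    intro t
    induction t using Nat.strong_induction_on with
    | _ t ih =>
      intro ht h1 h2
      rcases Nat.lt_or_ge t p' with hlt | hge
      · exact wc _ _ _ _ (by rw [Nat.mod_eq_of_lt hlt])
      · have htk : t - p' < k - 1 := by omega
        have hmod : t % p' = (t - p') % p' := by
          conv_lhs => rw [show t = (t - p') + p' by omega]
          rw [Nat.add_mod_right]
        have hbt : b + (t - p') < m := by omega
        have h1' : a + (t - p') % p' < m := by rw [← hmod]; exact h1
        have hat : a + (t - p') < m := by omega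
        have step := hwin (t - p') htk hat hbt
        calc w ⟨a + t % p', h1⟩
            = w ⟨a + (t - p') % p', h1'⟩ := wc _ _ _ _ (by rw [hmod])
          _ = w ⟨a + (t - p'), hat⟩ := ih (t - p') (by omega) (by omega) h1' hat
          _ = w ⟨b + (t - p'), hbt⟩ := step
          _ = w ⟨a + t, h2⟩ := wc _ _ _ _ (by omega)
  -- define the periodic configuration x
  have hxidx : ∀ i : ℤ, a + (i % (p':ℤ)).toNat < m := by
    intro i
    have h1 := Int.emod_nonneg i hp'int.ne'
    have h2 := Int.emod_lt_of_pos i hp'int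
    omega
  set x : ℤ → Bool := fun i => w ⟨a + (i % (p':ℤ)).toNat, hxidx i⟩ with hxdef
  have hxper : ∀ i, x (i + (p':ℤ)) = x i := by
    intro i
    have h1 : (i + (p':ℤ)) % (p':ℤ) = i % (p':ℤ) := by
      have h : i + (p':ℤ) = i + (p':ℤ) * 1 := by ring
      rw [h, Int.add_mul_emod_self_left]
    simp only [hxdef]
    exact wc _ _ _ _ (by rw [h1])
  -- value of x on naturals in terms of w
  have hx_nat : ∀ t : ℕ, t < p' + k - 1 → ∀ h2 : a + t < m,
      x ((t:ℕ):ℤ) = w ⟨a + t, h2⟩ := by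
    intro t ht h2
    have hc : (((t:ℕ):ℤ) % (p':ℤ)).toNat = t % p' := by
      rw [← Int.natCast_mod t p', Int.toNat_natCast]
    have hmid : a + t % p' < m := by
      have := Nat.mod_lt t hp'pos
      omega
    simp only [hxdef]
    exact (wc _ _ (hxidx ((t:ℕ):ℤ)) hmid (by rw [hc])).trans (hww t ht hmid h2)
  -- the main computation on [0, p')
  have hmain : ∀ s : ℕ, s < p' → caMap f x ((s:ℕ):ℤ) = Y (zmod' n hn ((s:ℕ):ℤ)) := by
    intro s hs
    have hlt : a + s < m - k + 1 := by omega
    have harg : (fun j : Fin k => x (((s:ℕ):ℤ) + (j.val:ℤ)))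
        = fun j : Fin k => w ⟨(a + s) + j.val, by have := j.isLt; omega⟩ := by
      funext j
      have hj := j.isLt
      have hcast : ((s:ℕ):ℤ) + (j.val:ℤ) = (((s + j.val : ℕ)):ℤ) := by push_cast; ring
      rw [hcast, hx_nat (s + j.val) (by omega) (by omega)]
      exact wc _ _ _ _ (by omega)
    have h5 : caMap f x ((s:ℕ):ℤ) = ncyc hm f w ⟨a + s, hlt⟩ := by
      show (f fun j : Fin k => x (((s:ℕ):ℤ) + (j.val:ℤ))) = _
      rw [harg]
      rfl
    rw [h5, hw]
    show Y (zmod' n hn (((a + s : ℕ)):ℤ)) = Y (zmod' n hn ((s:ℕ):ℤ))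
    have hcast2 : (((a + s : ℕ)):ℤ) = ((s:ℕ):ℤ) + (n:ℤ) * (u.val:ℤ) := by
      rw [ha]; push_cast; ring
    rw [hcast2, zmod'_add_mul]
  -- p' is a multiple of n on ℤ
  have hp'eq : (p':ℤ) = (n:ℤ) * (((v.val:ℤ) - (u.val:ℤ))) := by
    have h1 : (p':ℤ) = (b:ℤ) - (a:ℤ) := by omega
    rw [h1, ha, hb]; push_cast; ring
  -- extend to all integers
  have hfinal : ∀ i : ℤ, caMap f x i = Y (zmod' n hn i) := by
    intro i
    have hcp := caMap_per f hxper
    have h1 : caMap f x i = caMap f x (i % (p':ℤ)) := per_reduce hcp i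
    have hnn := Int.emod_nonneg i hp'int.ne'
    have hlt := Int.emod_lt_of_pos i hp'int
    have h2 : i % (p':ℤ) = (((i % (p':ℤ)).toNat : ℕ):ℤ) := (Int.toNat_of_nonneg hnn).symm
    have h3 : (i % (p':ℤ)).toNat < p' := by omega
    have h4 : zmod' n hn i = zmod' n hn (i % (p':ℤ)) := by
      conv_lhs => rw [← Int.emod_add_mul_ediv i (p':ℤ)]
      rw [hp'eq, mul_assoc]
      exact zmod'_add_mul n hn _ _
    rw [h1, h2, hmain _ h3, h4]
    conv_rhs => rw [h2]
  exact ⟨x, p', hp'pos, by omega, hxper, hfinal⟩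

lemma k_pos {k : ℕ} (f : (Fin k → Bool) → Bool)
    (hbal : ∀ (m : ℕ) (hm : k ≤ m) (y : Fin (m - k + 1) → Bool),
      (Finset.univ.filter fun x : Fin m → Bool => ncyc hm f x = y).card = 2 ^ (k - 1)) :
    0 < k := by
  rcases Nat.eq_zero_or_pos k with hk0 | h
  · exfalso
    subst hk0
    set c := f (fun j => j.elim0) with hc
    have key : ∀ (g : Fin 0 → Bool), f g = c := by
      intro g
      have hg : g = (fun j => j.elim0) := funext fun j => j.elim0
      rw [hg]
    have hbal1 := hbal 1 (by omega) (fun i => if i.val = 0 then c else !c)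
    have hzero : (Finset.univ.filter fun x : Fin 1 → Bool =>
        ncyc (by omega : (0:ℕ) ≤ 1) f x
          = (fun i : Fin (1 - 0 + 1) => if i.val = 0 then c else !c)).card = 0 := by
      rw [Finset.card_eq_zero, Finset.filter_eq_empty_iff]
      intro x _
      intro hx
      have h1 := congrFun hx ⟨1, by omega⟩
      have h1' : c = (if (1:ℕ) = 0 then c else !c) := (key _).symm.trans h1
      simp at h1'
    rw [hzero] at hbal1
    simp at hbal1
  · exact h

/-- If all non-wrapping induced maps are balanced, then every finite string of length
`n ≥ k` appears in the image under the cellular automaton of some periodic string of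
period at most `2^k·n`; in particular the cellular automaton maps the set of periodic
strings onto itself. -/
theorem stmt11 {k : ℕ} (f : (Fin k → Bool) → Bool)
    (hbal : ∀ (m : ℕ) (hm : k ≤ m) (y : Fin (m - k + 1) → Bool),
      (Finset.univ.filter fun x : Fin m → Bool => ncyc hm f x = y).card = 2 ^ (k - 1)) :
    (∀ n : ℕ, k ≤ n → ∀ y : Fin n → Bool,
      ∃ (x : ℤ → Bool) (p : ℤ), IsPeriodic x p ∧ p ≤ 2 ^ k * n ∧
        (∃ q : ℤ, IsPeriodic (caMap f x) q) ∧
        (∃ t : ℤ, ∀ i : Fin n, caMap f x (t + (i.val : ℤ)) = y i)) ∧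
    (∀ y : ℤ → Bool, (∃ q : ℤ, IsPeriodic y q) →
      ∃ x : ℤ → Bool, (∃ p : ℤ, IsPeriodic x p) ∧ caMap f x = y) := by
  have hk : 0 < k := k_pos f hbal
  constructor
  · intro n hkn y
    have hn : 0 < n := lt_of_lt_of_le hk hkn
    obtain ⟨x, p', hp'0, hle, hper, hmap⟩ := core_lemma hk f hbal hn y
    have hp'int : (0:ℤ) < (p':ℤ) := by exact_mod_cast hp'0
    refine ⟨x, (p':ℤ), ⟨hp'int, hper⟩, ?_, ⟨(p':ℤ), hp'int, caMap_per f hper⟩, 0, ?_⟩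
    · have h1 : p' ≤ 2 ^ k * n := by
        calc p' ≤ 2 ^ (k - 1) * n := hle
          _ ≤ 2 ^ k * n := Nat.mul_le_mul_right n (Nat.pow_le_pow_right (by norm_num) (by omega))
      exact_mod_cast h1
    · intro i
      rw [zero_add, hmap ((i.val : ℤ)), zmod'_coe]
  · rintro y ⟨q, hq0, hqper⟩
    set N := q.toNat with hNdef
    have hN : 0 < N := by omega
    obtain ⟨x, p', hp'0, _, hper, hmap⟩ :=
      core_lemma hk f hbal hN (fun i : Fin N => y ((i.val : ℤ)))
    refine ⟨x, ⟨(p':ℤ), by exact_mod_cast hp'0, hper⟩, ?_⟩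
    funext i
    rw [hmap i]
    show y (((i % (N:ℤ)).toNat : ℤ)) = y i
    have hNint : (0:ℤ) < (N:ℤ) := by exact_mod_cast hN
    have h1 : ((i % (N:ℤ)).toNat : ℤ) = i % (N:ℤ) :=
      Int.toNat_of_nonneg (Int.emod_nonneg i hNint.ne')
    rw [h1]
    have hyN : ∀ j, y (j + (N:ℤ)) = y j := by
      intro j
      have hNq : (N:ℤ) = q := by omega
      rw [hNq]
      exact hqper j
    exact (per_reduce hyN i).symm
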